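/- arXiv:1111.0053 — 4 statements merged into one kernel-verified Lean document; each statement's English description precedes it below -/
import Mathlib

section
/- If S is an induced subgraph of G and P is a valid concrete plan in S from arrangement a to arrangement b, then P is also a valid concrete plan in G from any arrangement extending a to the corresponding arrangement extending b (with robots outside S fixed). -/
open scoped Classical

/-- An arrangement of robots `R` on vertices `V`: an injective partial map `V ⇀ R`. -/
abbrev Arrangement (V R : Type) := V → Option R

/-- Injectivity of an arrangement: no robot occupies two vertices. -/
def ArrInj {V R : Type} (a : Arrangement V R) : Prop :=
  ∀ u v r, a u = some r → a v = some r → u = v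

/-- A plan-step `(r, u, v)` is applicable if `r` is at `u`, `v` is unoccupied,
and `(u,v)` is an edge. -/
def Applicable {V R : Type} (G : SimpleGraph V) (a : Arrangement V R)
    (s : R × V × V) : Prop :=
  G.Adj s.2.1 s.2.2 ∧ a s.2.1 = some s.1 ∧ a s.2.2 = none

/-- Applying a plan-step: move the robot from `u` to `v`. -/
noncomputable def applyStep {V R : Type} (a : Arrangement V R) (s : R × V × V) :
    Arrangement V R :=
  fun w => if w = s.2.2 then some s.1 else if w = s.2.1 then none else a w

/-- `IsPlan G P a b`: the sequence of plan-steps `P` is a valid concrete plan in `G`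
transforming arrangement `a` into arrangement `b`. -/
def IsPlan {V R : Type} (G : SimpleGraph V) :
    List (R × V × V) → Arrangement V R → Arrangement V R → Prop
  | [], a, b => a = b
  | s :: P, a, b => Applicable G a s ∧ IsPlan G P (applyStep a s) b

/-- If `S` is (the vertex set of) an induced subgraph of `G` and `P` is a valid
concrete plan within `S` from arrangement `a` to arrangement `b` (all steps between
vertices of `S`, with `a`, `b` supported on `S`), then `P` is also a valid concrete
plan in `G` from any arrangement `a'` extending `a` to the corresponding
arrangement `b'` extending `b` (robots outside `S` fixed). -/
theorem plan_in_subgraph_extends {V R : Type} (G : SimpleGraph V) (S : Set V)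
    (P : List (R × V × V)) (a b a' b' : Arrangement V R)
    (hsteps : ∀ s ∈ P, s.2.1 ∈ S ∧ s.2.2 ∈ S)
    (ha : ∀ v ∉ S, a v = none) (hbsupp : ∀ v ∉ S, b v = none)
    (hplan : IsPlan G P a b)
    (ha' : ∀ v ∈ S, a' v = a v)
    (hb'in : ∀ v ∈ S, b' v = b v)
    (hb'out : ∀ v ∉ S, b' v = a' v) :
    IsPlan G P a' b' := by
  induction P generalizing a a' with
  | nil =>
    simp only [IsPlan] at hplan ⊢
    funext v
    by_cases hv : v ∈ S
    · rw [ha' v hv, hb'in v hv, hplan]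
    · rw [hb'out v hv]
  | cons s P ih =>
    obtain ⟨⟨hadj, hu, hvnone⟩, hrest⟩ := hplan
    obtain ⟨hu1, hu2⟩ := hsteps s List.mem_cons_self
    refine ⟨⟨hadj, by rw [ha' _ hu1, hu], by rw [ha' _ hu2, hvnone]⟩, ?_⟩
    refine ih _ _ (fun t ht => hsteps t (List.mem_cons_of_mem _ ht)) ?_ hrest ?_ ?_
    · intro v hv
      have h1 : v ≠ s.2.2 := fun h => hv (h ▸ hu2)
      have h2 : v ≠ s.2.1 := fun h => hv (h ▸ hu1)
      simp [applyStep, h1, h2, ha v hv]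
    · intro v hv
      by_cases h1 : v = s.2.2 <;> by_cases h2 : v = s.2.1 <;>
        simp [applyStep, h1, h2, ha' v hv]
    · intro v hv
      have h1 : v ≠ s.2.2 := fun h => hv (h ▸ hu2)
      have h2 : v ≠ s.2.1 := fun h => hv (h ▸ hu1)
      simp [applyStep, h1, h2, hb'out v hv]
end

section
/- If S_1 and S_2 are disjoint induced subgraphs of G, P_1 is a plan on S_1 from a_1 to b_1, P_2 is a plan on S_2 from a_2 to b_2, and a_1, a_2 use disjoint sets of robots, then every interleaving of P_1 and P_2 is a valid plan on G from a_1 ⊗ a_2 to b_1 ⊗ b_2. -/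
open scoped Classical

/-- `Interleaving P Q L`: `L` contains `P` and `Q` as complementary subsequences
preserving their orders. -/
inductive Interleaving {α : Type} : List α → List α → List α → Prop
  | nil : Interleaving [] [] []
  | left {P Q L : List α} (s : α) : Interleaving P Q L → Interleaving (s :: P) Q (s :: L)
  | right {P Q L : List α} (s : α) : Interleaving P Q L → Interleaving P (s :: Q) (s :: L)

/-- The combined arrangement `a₁ ⊗ a₂` of two arrangements supported on disjoint
vertex sets. -/
def combineArr {V R : Type} (a₁ a₂ : Arrangement V R) : Arrangement V R :=
  fun v => (a₁ v).orElse (fun _ => a₂ v)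

lemma combine_left {V R : Type} (S₁ S₂ : Set V) (hS : Disjoint S₁ S₂)
    (a₂ : Arrangement V R) (ha₂ : ∀ v ∉ S₂, a₂ v = none)
    (a₁ : Arrangement V R) (v : V) (hv : v ∈ S₁) :
    combineArr a₁ a₂ v = a₁ v := by
  have h2 : a₂ v = none := ha₂ v (fun h => hS.ne_of_mem hv h rfl)
  unfold combineArr
  cases h : a₁ v <;> simp [h, h2]

lemma interleaving_plan_aux {V R : Type} (G : SimpleGraph V) (S₁ S₂ : Set V)
    (hS : Disjoint S₁ S₂)
    (P₁ P₂ L : List (R × V × V)) (hL : Interleaving P₁ P₂ L) :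
    ∀ (a₁ b₁ a₂ b₂ : Arrangement V R),
    (∀ s ∈ P₁, s.2.1 ∈ S₁ ∧ s.2.2 ∈ S₁) →
    (∀ s ∈ P₂, s.2.1 ∈ S₂ ∧ s.2.2 ∈ S₂) →
    (∀ v ∉ S₁, a₁ v = none) → (∀ v ∉ S₂, a₂ v = none) →
    IsPlan G P₁ a₁ b₁ → IsPlan G P₂ a₂ b₂ →
    IsPlan G L (combineArr a₁ a₂) (combineArr b₁ b₂) := by
  induction hL with
  | nil =>
    intro a₁ b₁ a₂ b₂ _ _ _ _ h1 h2
    simp only [IsPlan] at h1 h2 ⊢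
    rw [h1, h2]
  | left s hI ih =>
    intro a₁ b₁ a₂ b₂ hs₁ hs₂ ha₁ ha₂ h1 h2
    obtain ⟨⟨hadj, hu, hv⟩, h1'⟩ := h1
    obtain ⟨hmem1, hmem2⟩ := hs₁ s List.mem_cons_self
    have hcu := combine_left S₁ S₂ hS a₂ ha₂ a₁ s.2.1 hmem1
    have hcv := combine_left S₁ S₂ hS a₂ ha₂ a₁ s.2.2 hmem2
    refine ⟨⟨hadj, by rw [hcu, hu], by rw [hcv, hv]⟩, ?_⟩
    have heq : applyStep (combineArr a₁ a₂) s = combineArr (applyStep a₁ s) a₂ := by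
      funext w
      by_cases hw2 : w = s.2.2
      · subst hw2
        rw [combine_left S₁ S₂ hS a₂ ha₂ _ _ hmem2]
        simp [applyStep]
      · by_cases hw1 : w = s.2.1
        · subst hw1
          rw [combine_left S₁ S₂ hS a₂ ha₂ _ _ hmem1]
          simp [applyStep, hw2]
        · simp only [applyStep, if_neg hw2, if_neg hw1]
          unfold combineArr
          simp [applyStep, hw1, hw2]
    rw [heq]
    refine ih (applyStep a₁ s) b₁ a₂ b₂ (fun t ht => hs₁ t (List.mem_cons_of_mem _ ht))
      hs₂ ?_ ha₂ h1' h2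
    intro v hvS
    simp only [applyStep, if_neg (fun h : v = s.2.2 => hvS (h ▸ hmem2))]
    by_cases hv1 : v = s.2.1
    · simp [hv1]
    · simp [hv1, ha₁ v hvS]
  | right s hI ih =>
    intro a₁ b₁ a₂ b₂ hs₁ hs₂ ha₁ ha₂ h1 h2
    obtain ⟨⟨hadj, hu, hv⟩, h2'⟩ := h2
    obtain ⟨hmem1, hmem2⟩ := hs₂ s List.mem_cons_self
    have hS' := hS.symm
    have key : ∀ (x : Arrangement V R) (v : V), v ∈ S₂ → combineArr a₁ x v = x v := by
      intro x v hv
      have h1n : a₁ v = none := ha₁ v (fun h => hS'.ne_of_mem hv h rfl)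
      unfold combineArr
      simp [h1n]
    refine ⟨⟨hadj, by rw [key a₂ _ hmem1, hu], by rw [key a₂ _ hmem2, hv]⟩, ?_⟩
    have heq : applyStep (combineArr a₁ a₂) s = combineArr a₁ (applyStep a₂ s) := by
      funext w
      by_cases hw2 : w = s.2.2
      · subst hw2
        rw [key (applyStep a₂ s) _ hmem2]
        simp [applyStep]
      · by_cases hw1 : w = s.2.1
        · subst hw1
          rw [key (applyStep a₂ s) _ hmem1]
          simp [applyStep, hw2]
        · simp only [applyStep, if_neg hw2, if_neg hw1]
          unfold combineArr
          simp [applyStep, hw1, hw2]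
    rw [heq]
    refine ih a₁ b₁ (applyStep a₂ s) b₂ hs₁
      (fun t ht => hs₂ t (List.mem_cons_of_mem _ ht)) ha₁ ?_ h1 h2'
    intro v hvS
    simp only [applyStep, if_neg (fun h : v = s.2.2 => hvS (h ▸ hmem2))]
    by_cases hv1 : v = s.2.1
    · simp [hv1]
    · simp [hv1, ha₂ v hvS]

/-- If `S₁` and `S₂` are disjoint induced subgraphs of `G`, `P₁` is a plan on `S₁`
from `a₁` to `b₁`, `P₂` is a plan on `S₂` from `a₂` to `b₂`, and `a₁`, `a₂` use
disjoint sets of robots, then every interleaving of `P₁` and `P₂` is a valid plan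
on `G` from `a₁ ⊗ a₂` to `b₁ ⊗ b₂`. -/
theorem interleaving_plan {V R : Type} (G : SimpleGraph V) (S₁ S₂ : Set V)
    (hS : Disjoint S₁ S₂)
    (P₁ P₂ L : List (R × V × V)) (a₁ b₁ a₂ b₂ : Arrangement V R)
    (hsteps₁ : ∀ s ∈ P₁, s.2.1 ∈ S₁ ∧ s.2.2 ∈ S₁)
    (hsteps₂ : ∀ s ∈ P₂, s.2.1 ∈ S₂ ∧ s.2.2 ∈ S₂)
    (ha₁ : ∀ v ∉ S₁, a₁ v = none) (hb₁ : ∀ v ∉ S₁, b₁ v = none)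
    (ha₂ : ∀ v ∉ S₂, a₂ v = none) (hb₂ : ∀ v ∉ S₂, b₂ v = none)
    (hrobots : ∀ r : R, ¬ ((∃ v, a₁ v = some r) ∧ ∃ w, a₂ w = some r))
    (hplan₁ : IsPlan G P₁ a₁ b₁) (hplan₂ : IsPlan G P₂ a₂ b₂)
    (hL : Interleaving P₁ P₂ L) :
    IsPlan G L (combineArr a₁ a₂) (combineArr b₁ b₂) := interleaving_plan_aux G S₁ S₂ hS P₁ P₂ L hL a₁ b₁ a₂ b₂ hsteps₁ hsteps₂ ha₁ ha₂ hplan₁ hplan₂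
end

section
/- For any configuration c of a graph G, robot r, and vertex v, the set c ⊖ (r,v) = { [a ⊖ r] : a ∈ c, a(v) = r } contains at most one element. -/
open scoped Classical

/-- Mutual reachability by plans confined to the vertex set `S` (an induced
subgraph of `G`). -/
def SimIn {V R : Type} (G : SimpleGraph V) (S : Set V) (a b : Arrangement V R) : Prop :=
  (∃ P : List (R × V × V), (∀ s ∈ P, s.2.1 ∈ S ∧ s.2.2 ∈ S) ∧ IsPlan G P a b) ∧
  (∃ Q : List (R × V × V), (∀ s ∈ Q, s.2.1 ∈ S ∧ s.2.2 ∈ S) ∧ IsPlan G Q b a)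

/-- The configuration (equivalence class) of the arrangement `a` within the
subgraph `S` of `G`. -/
def clsIn {V R : Type} (G : SimpleGraph V) (S : Set V) (a : Arrangement V R) :
    Set (Arrangement V R) :=
  {b | SimIn G S a b}

/-- The arrangement `a ⊖ r`: remove robot `r`. -/
noncomputable def removeR {V R : Type} (a : Arrangement V R) (r : R) : Arrangement V R :=
  fun w => if a w = some r then none else a w

/-- The arrangement `a ⊕ (r, v)`: add robot `r` at vertex `v`. -/
noncomputable def addR {V R : Type} (a : Arrangement V R) (r : R) (v : V) :
    Arrangement V R :=
  fun w => if w = v then some r else a w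

/-- `c ⊖ (r, u)`: the set of configurations obtained from configuration `c` by
removing robot `r` exiting via vertex `u`. -/
def ominusC {V R : Type} (G : SimpleGraph V) (S : Set V)
    (c : Set (Arrangement V R)) (r : R) (u : V) : Set (Set (Arrangement V R)) :=
  {C | ∃ a ∈ c, a u = some r ∧ C = clsIn G S (removeR a r)}

/-- `c ⊕ (r, v)`: the set of configurations obtained from configuration `c` by
adding robot `r` entering at vertex `v`. -/
def oplusC {V R : Type} (G : SimpleGraph V) (S : Set V)
    (c : Set (Arrangement V R)) (r : R) (v : V) : Set (Set (Arrangement V R)) :=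
  {C | ∃ a ∈ c, a v = none ∧ C = clsIn G S (addR a r v)}

/-- The restriction `a / S` of an arrangement to a vertex set. -/
noncomputable def restrictArr {V R : Type} (a : Arrangement V R) (S : Set V) :
    Arrangement V R :=
  fun v => if v ∈ S then a v else none

lemma isPlan_append {V R : Type} (G : SimpleGraph V) :
    ∀ (P Q : List (R × V × V)) (a b d : Arrangement V R),
      IsPlan G P a b → IsPlan G Q b d → IsPlan G (P ++ Q) a d := by
  intro P
  induction P with
  | nil => intro Q a b d h1 h2; cases h1; simpa using h2
  | cons s P ih =>
    intro Q a b d h1 h2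
    exact ⟨h1.1, ih Q _ b d h1.2 h2⟩

lemma removeR_applyStep {V R : Type} {G : SimpleGraph V} {a : Arrangement V R}
    {s : R × V × V} (r : R) (hs : Applicable G a s) :
    removeR (applyStep a s) r =
      if s.1 = r then removeR a r else applyStep (removeR a r) s := by
  have hne : s.2.1 ≠ s.2.2 := hs.1.ne
  funext w
  by_cases h : s.1 = r
  · rw [if_pos h]
    subst h
    show (if applyStep a s w = some s.1 then none else applyStep a s w)
        = (if a w = some s.1 then none else a w)
    unfold applyStep
    by_cases h2 : w = s.2.2
    · subst h2; simp [hs.2.2]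
    · by_cases h1 : w = s.2.1
      · subst h1; simp [h2, hs.2.1]
      · simp [h1, h2]
  · rw [if_neg h]
    show (if applyStep a s w = some r then none else applyStep a s w)
        = applyStep (fun w => if a w = some r then none else a w) s w
    unfold applyStep
    by_cases h2 : w = s.2.2
    · subst h2
      simp [h]
    · by_cases h1 : w = s.2.1
      · subst h1; simp [h2]
      · simp [h1, h2]

lemma isPlan_remove {V R : Type} (G : SimpleGraph V) (r : R) :
    ∀ (P : List (R × V × V)) (a b : Arrangement V R), IsPlan G P a b →
      IsPlan G (P.filter (fun s => s.1 ≠ r)) (removeR a r) (removeR b r) := by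
  intro P
  induction P with
  | nil => intro a b h; cases h; simp [IsPlan]
  | cons s P ih =>
    intro a b h
    obtain ⟨happ, hrest⟩ := h
    have hstep := removeR_applyStep r happ
    by_cases hr : s.1 = r
    · rw [if_pos hr] at hstep
      have := ih _ _ hrest
      rw [hstep] at this
      simpa [List.filter_cons, hr] using this
    · rw [if_neg hr] at hstep
      have happ' : Applicable G (removeR a r) s := by
        refine ⟨happ.1, ?_, ?_⟩
        · show (if a s.2.1 = some r then none else a s.2.1) = some s.1
          simp [happ.2.1, hr]
        · show (if a s.2.2 = some r then none else a s.2.2) = none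
          simp [happ.2.2]
      have h3 := ih _ _ hrest
      rw [hstep] at h3
      rw [List.filter_cons, if_pos (by simpa using hr)]
      exact ⟨happ', h3⟩

lemma simIn_remove {V R : Type} (G : SimpleGraph V) (r : R)
    {a b : Arrangement V R} (h : SimIn G Set.univ a b) :
    SimIn G Set.univ (removeR a r) (removeR b r) := by
  obtain ⟨⟨P, _, hP⟩, ⟨Q, _, hQ⟩⟩ := h
  exact ⟨⟨_, by simp, isPlan_remove G r P a b hP⟩,
         ⟨_, by simp, isPlan_remove G r Q b a hQ⟩⟩

lemma simIn_symm {V R : Type} {G : SimpleGraph V} {S : Set V}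
    {a b : Arrangement V R} (h : SimIn G S a b) : SimIn G S b a :=
  ⟨h.2, h.1⟩

lemma simIn_trans {V R : Type} {G : SimpleGraph V} {S : Set V}
    {a b d : Arrangement V R} (h1 : SimIn G S a b) (h2 : SimIn G S b d) :
    SimIn G S a d := by
  obtain ⟨⟨P1, hP1m, hP1⟩, ⟨Q1, hQ1m, hQ1⟩⟩ := h1
  obtain ⟨⟨P2, hP2m, hP2⟩, ⟨Q2, hQ2m, hQ2⟩⟩ := h2
  refine ⟨⟨P1 ++ P2, ?_, isPlan_append G _ _ _ _ _ hP1 hP2⟩,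
          ⟨Q2 ++ Q1, ?_, isPlan_append G _ _ _ _ _ hQ2 hQ1⟩⟩ <;>
    intro s hs <;> rw [List.mem_append] at hs <;>
    rcases hs with hs | hs
  · exact hP1m s hs
  · exact hP2m s hs
  · exact hQ2m s hs
  · exact hQ1m s hs

lemma clsIn_eq_of_simIn {V R : Type} {G : SimpleGraph V} {S : Set V}
    {a b : Arrangement V R} (h : SimIn G S a b) : clsIn G S a = clsIn G S b := by
  ext x
  exact ⟨fun hx => simIn_trans (simIn_symm h) hx, fun hx => simIn_trans h hx⟩

/-- For any configuration `c` of a graph `G` (an equivalence class of arrangements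
under mutual reachability), robot `r` and vertex `v`, the set
`c ⊖ (r,v) = { [a ⊖ r] : a ∈ c, a v = r }` contains at most one element. -/
theorem ominus_subsingleton {V R : Type} (G : SimpleGraph V)
    (c : Set (Arrangement V R)) (r : R) (v : V)
    (hc : ∃ a₀ : Arrangement V R, c = clsIn G Set.univ a₀) :
    (ominusC G Set.univ c r v).Subsingleton := by
  intro C1 h1 C2 h2
  obtain ⟨a1, ha1, _, rfl⟩ := h1
  obtain ⟨a2, ha2, _, rfl⟩ := h2
  obtain ⟨a₀, rfl⟩ := hc
  exact clsIn_eq_of_simIn (simIn_remove G r (simIn_trans (simIn_symm ha1) ha2))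
end

section
/- In a cycle graph (ring) on n vertices occupied by k < n robots, two arrangements of the same robot set are mutually reachable iff their cyclic orderings of robots around the ring agree up to rotation; in particular the cyclic order cannot be reversed or permuted otherwise. -/
open scoped Classical

/-- The cyclic reading of an arrangement on the cycle graph: the sequence of robots
read around the ring in increasing vertex index. -/
def ordering {R : Type} {n : ℕ} (a : Arrangement (Fin n) R) : List R :=
  (List.finRange n).filterMap a

/- ### Auxiliary development -/

namespace RingAux

variable {V R : Type}

def Reach (G : SimpleGraph V) (a b : Arrangement V R) : Prop :=
  ∃ P : List (R × V × V), IsPlan G P a b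

lemma isPlan_append {G : SimpleGraph V} :
    ∀ (P Q : List (R × V × V)) (a b c : Arrangement V R),
      IsPlan G P a b → IsPlan G Q b c → IsPlan G (P ++ Q) a c
  | [], Q, a, b, c, hP, hQ => by cases hP; exact hQ
  | s :: P, Q, a, b, c, hP, hQ => ⟨hP.1, isPlan_append P Q _ b c hP.2 hQ⟩

lemma Reach.refl {G : SimpleGraph V} (a : Arrangement V R) : Reach G a a := ⟨[], rfl⟩

lemma Reach.trans {G : SimpleGraph V} {a b c : Arrangement V R}
    (h1 : Reach G a b) (h2 : Reach G b c) : Reach G a c := by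
  obtain ⟨P, hP⟩ := h1; obtain ⟨Q, hQ⟩ := h2
  exact ⟨P ++ Q, isPlan_append P Q a b c hP hQ⟩

lemma Reach.single {G : SimpleGraph V} {a : Arrangement V R} {s : R × V × V}
    (h : Applicable G a s) : Reach G a (applyStep a s) := ⟨[s], h, rfl⟩

lemma applyStep_rev {G : SimpleGraph V} {a : Arrangement V R} {s : R × V × V}
    (h : Applicable G a s) :
    Applicable G (applyStep a s) (s.1, s.2.2, s.2.1) ∧
      applyStep (applyStep a s) (s.1, s.2.2, s.2.1) = a := by
  obtain ⟨hadj, hu, hv⟩ := h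
  have hne : s.2.1 ≠ s.2.2 := hadj.ne
  constructor
  · refine ⟨hadj.symm, ?_, ?_⟩
    · simp [applyStep]
    · simp [applyStep, hne]
  · funext w
    by_cases h1 : w = s.2.1
    · simp [applyStep, h1, hne, hu]
    · by_cases h2 : w = s.2.2
      · simp [applyStep, h1, h2, Ne.symm hne, hv]
      · simp [applyStep, h1, h2]

lemma isPlan_symm {G : SimpleGraph V} :
    ∀ (P : List (R × V × V)) (a b : Arrangement V R), IsPlan G P a b → Reach G b a
  | [], a, b, hP => by cases hP; exact Reach.refl _
  | s :: P, a, b, hP => by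
    obtain ⟨hs, hP'⟩ := hP
    have h1 : Reach G b (applyStep a s) := isPlan_symm P _ b hP'
    have h2 := applyStep_rev hs
    refine h1.trans ?_
    have := Reach.single (G := G) h2.1
    rwa [h2.2] at this

lemma Reach.symm {G : SimpleGraph V} {a b : Arrangement V R}
    (h : Reach G a b) : Reach G b a := by
  obtain ⟨P, hP⟩ := h
  exact isPlan_symm P a b hP

/- ### Ordering via ℕ-indexed functions -/

variable {n : ℕ}

/-- The arrangement as a function on `ℕ`. -/
def fA (a : Arrangement (Fin n) R) : ℕ → Option R :=
  fun i => if h : i < n then a ⟨i, h⟩ else none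

lemma ordering_eq (a : Arrangement (Fin n) R) :
    ordering a = (List.range' 0 n).filterMap (fA a) := by
  rw [← List.range_eq_range', ← (show (List.finRange n).map Fin.val = List.range n from List.ext_getElem (by simp) (by simp)), List.filterMap_map]
  unfold ordering
  apply List.filterMap_congr
  intro v _
  simp [fA, Function.comp, v.isLt]

lemma filterMap_none {f : ℕ → Option R} {s m : ℕ}
    (h : ∀ i, s ≤ i → f i = none) : (List.range' s m).filterMap f = [] := by
  rw [List.filterMap_eq_nil_iff]
  intro i hi
  exact h i (List.mem_range'_1.mp hi).1

lemma down_get {f : ℕ → Option R} :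
    ∀ (m s : ℕ), (∀ i j, s ≤ i → i ≤ j → f i = none → f j = none) →
      ∀ t, t < m → ((List.range' s m).filterMap f)[t]? = f (s + t) := by
  intro m
  induction m with
  | zero => omega
  | succ m ih =>
    intro s hd t ht
    rw [List.range'_succ]
    cases hf : f s with
    | none =>
      have : ∀ i, s ≤ i → f i = none := fun i hi => hd s i le_rfl hi hf
      rw [List.filterMap_cons_none hf, filterMap_none (fun i hi => this i (by omega))]
      simp [this (s + t) (by omega)]
    | some r =>
      rw [List.filterMap_cons_some hf]
      cases t with
      | zero => simpa using hf.symm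
      | succ t =>
        have := ih (s + 1) (fun i j hi hij h0 => hd i j (by omega) hij h0) t (by omega)
        simpa [show s + (t + 1) = s + 1 + t by omega] using this

/-- Downward-closedness of the occupied set. -/
def Down (a : Arrangement (Fin n) R) : Prop :=
  ∀ i j : Fin n, i ≤ j → a i = none → a j = none

lemma down_fA {a : Arrangement (Fin n) R} (hd : Down a) :
    ∀ i j, 0 ≤ i → i ≤ j → fA a i = none → fA a j = none := by
  intro i j _ hij hfi
  by_cases hj : j < n
  · have hi : i < n := lt_of_le_of_lt hij hj
    simp only [fA, dif_pos hi] at hfi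
    simp only [fA, dif_pos hj]
    exact hd ⟨i, hi⟩ ⟨j, hj⟩ hij hfi
  · simp [fA, hj]

lemma ordering_length_le (a : Arrangement (Fin n) R) : (ordering a).length ≤ n := by
  have := List.length_filterMap_le a (List.finRange n)
  simpa [ordering] using this

lemma down_get' {a : Arrangement (Fin n) R} (hd : Down a) (i : ℕ) (hi : i < n) :
    (ordering a)[i]? = fA a i := by
  rw [ordering_eq]
  simpa using down_get n 0 (down_fA hd) i hi

/-- The canonical arrangement with reading `L`. -/
def canonA (L : List R) : Arrangement (Fin n) R := fun v => L[v.val]?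

lemma down_canonA (L : List R) : Down (canonA (n := n) L) := by
  intro i j hij hi
  simp only [canonA] at *
  rw [List.getElem?_eq_none_iff] at *
  omega

lemma down_eq_canon {a : Arrangement (Fin n) R} (hd : Down a) :
    a = canonA (ordering a) := by
  funext v
  have := down_get' hd v.val v.isLt
  simp only [canonA]
  rw [this]
  simp [fA, v.isLt]

lemma ordering_canonA {L : List R} (hL : L.length ≤ n) :
    ordering (canonA (n := n) L) = L := by
  apply List.ext_getElem?
  intro i
  by_cases hi : i < n
  · rw [down_get' (down_canonA L) i hi]
    simp [fA, hi, canonA]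
  · have h1 : (ordering (canonA (n := n) L))[i]? = none :=
      List.getElem?_eq_none (le_trans (ordering_length_le _) (by omega))
    have h2 : L[i]? = none := List.getElem?_eq_none (by omega)
    rw [h1, h2]

end RingAux
namespace RingAux

variable {R : Type} {n : ℕ}

lemma range_split2 (i : ℕ) (h : i + 2 ≤ n) :
    List.range' 0 n = List.range' 0 i ++ [i, i + 1] ++ List.range' (i + 2) (n - i - 2) := by
  have h1 : List.range' 0 i ++ List.range' (0 + 1 * i) (n - i) = List.range' 0 ((n - i) + i) :=
    by rw [List.range'_append]; congr 1; omega
  have h2 : List.range' i 2 ++ List.range' (i + 1 * 2) (n - i - 2) =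
      List.range' i ((n - i - 2) + 2) := by
    rw [List.range'_append]; congr 1; omega
  simp only [one_mul, Nat.zero_add] at h1 h2
  rw [show n = (n - i) + i by omega] 
  rw [← h1, show n - i = (n - i - 2) + 2 by omega, ← h2]
  simp [List.range'_succ, List.append_assoc]

lemma range_split_wrap (h : 3 ≤ n) :
    List.range' 0 n = [0] ++ List.range' 1 (n - 2) ++ [n - 1] := by
  symm
  have e0 : ([0] : List ℕ) = List.range' 0 1 := by simp
  have e1 : ([n - 1] : List ℕ) = List.range' (n - 1) 1 := by simp
  rw [e0, e1]
  have h1 : List.range' 0 1 ++ List.range' (0 + 1 * 1) (n - 2) = List.range' 0 ((n - 2) + 1) := by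
    rw [List.range'_append]; congr 1; omega
  simp only [one_mul, Nat.zero_add] at h1
  rw [h1]
  have h2 : List.range' 0 (n - 2 + 1) ++ List.range' (0 + 1 * (n - 2 + 1)) 1 =
      List.range' 0 (1 + (n - 2 + 1)) := by
    rw [List.range'_append]; congr 1; omega
  simp only [one_mul, Nat.zero_add] at h2
  rw [show n - 1 = n - 2 + 1 by omega, h2, show 1 + (n - 2 + 1) = n by omega]

lemma fA_applyStep_other {a : Arrangement (Fin n) R} {r : R} {u v : Fin n} {j : ℕ}
    (hju : j ≠ u.val) (hjv : j ≠ v.val) :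
    fA (applyStep a (r, u, v)) j = fA a j := by
  unfold fA applyStep
  by_cases hj : j < n
  · simp only [dif_pos hj]
    rw [if_neg (by simp [Fin.ext_iff]; omega), if_neg (by simp [Fin.ext_iff]; omega)]
  · simp [hj]

lemma fA_applyStep_src {a : Arrangement (Fin n) R} {r : R} {u v : Fin n}
    (hne : u ≠ v) : fA (applyStep a (r, u, v)) u.val = none := by
  simp [fA, applyStep, u.isLt, hne]

lemma fA_applyStep_tgt {a : Arrangement (Fin n) R} {r : R} {u v : Fin n} :
    fA (applyStep a (r, u, v)) v.val = some r := by
  simp [fA, applyStep, v.isLt]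

lemma fA_val (a : Arrangement (Fin n) R) (u : Fin n) : fA a u.val = a u := by
  simp [fA, u.isLt]

lemma ordering_move_right {a : Arrangement (Fin n) R} {r : R} {u v : Fin n}
    (huv : v.val = u.val + 1) (h1 : a u = some r) (h2 : a v = none) :
    ordering (applyStep a (r, u, v)) = ordering a := by
  have hne : u ≠ v := fun h => by rw [h] at huv; omega
  have hn2 : u.val + 2 ≤ n := by have := v.isLt; omega
  rw [ordering_eq, ordering_eq, range_split2 u.val hn2]
  simp only [List.filterMap_append]
  congr 1
  · congr 1
    · exact List.filterMap_congr fun x hx => by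
        have := List.mem_range'_1.mp hx
        exact fA_applyStep_other (by omega) (by omega)
    · show List.filterMap _ [u.val, u.val + 1] = List.filterMap _ [u.val, u.val + 1]
      rw [show u.val + 1 = v.val from huv.symm]
      simp only [List.filterMap_cons, List.filterMap_nil]
      rw [fA_applyStep_src hne, fA_applyStep_tgt, fA_val, fA_val, h1, h2]
  · exact List.filterMap_congr fun x hx => by
      have := List.mem_range'_1.mp hx
      exact fA_applyStep_other (by omega) (by omega)

lemma ordering_move_left {a : Arrangement (Fin n) R} {r : R} {u v : Fin n}
    (huv : u.val = v.val + 1) (h1 : a u = some r) (h2 : a v = none) :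
    ordering (applyStep a (r, u, v)) = ordering a := by
  have hne : u ≠ v := fun h => by rw [h] at huv; omega
  have hn2 : v.val + 2 ≤ n := by have := u.isLt; omega
  rw [ordering_eq, ordering_eq, range_split2 v.val hn2]
  simp only [List.filterMap_append]
  congr 1
  · congr 1
    · exact List.filterMap_congr fun x hx => by
        have := List.mem_range'_1.mp hx
        exact fA_applyStep_other (by omega) (by omega)
    · show List.filterMap _ [v.val, v.val + 1] = List.filterMap _ [v.val, v.val + 1]
      rw [show v.val + 1 = u.val from huv.symm]
      simp only [List.filterMap_cons, List.filterMap_nil]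
      rw [fA_applyStep_tgt, fA_applyStep_src hne, fA_val, fA_val, h1, h2]
  · exact List.filterMap_congr fun x hx => by
      have := List.mem_range'_1.mp hx
      exact fA_applyStep_other (by omega) (by omega)

lemma ordering_move_wrap_bwd (hn : 3 ≤ n) {a : Arrangement (Fin n) R} {r : R} {u v : Fin n}
    (hu0 : u.val = 0) (hvn : v.val = n - 1) (h1 : a u = some r) (h2 : a v = none) :
    ∃ M, ordering a = r :: M ∧ ordering (applyStep a (r, u, v)) = M ++ [r] := by
  have hne : u ≠ v := fun h => by rw [h] at hu0; omega
  refine ⟨(List.range' 1 (n - 2)).filterMap (fA a), ?_, ?_⟩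
  · rw [ordering_eq, range_split_wrap hn]
    simp only [List.filterMap_append]
    rw [show ([0] : List ℕ) = [u.val] by rw [hu0], show ([n-1] : List ℕ) = [v.val] by rw [hvn]]
    simp only [List.filterMap_cons, List.filterMap_nil]
    rw [fA_val, fA_val, h1, h2]
    simp
  · rw [ordering_eq, range_split_wrap hn]
    simp only [List.filterMap_append]
    rw [show ([0] : List ℕ) = [u.val] by rw [hu0], show ([n-1] : List ℕ) = [v.val] by rw [hvn]]
    simp only [List.filterMap_cons, List.filterMap_nil]
    rw [fA_applyStep_src hne, fA_applyStep_tgt]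
    have : (List.range' 1 (n-2)).filterMap (fA (applyStep a (r, u, v))) =
        (List.range' 1 (n-2)).filterMap (fA a) := by
      exact List.filterMap_congr fun x hx => by
        have := List.mem_range'_1.mp hx
        exact fA_applyStep_other (by omega) (by omega)
    rw [this]
    simp

lemma ordering_move_wrap_fwd (hn : 3 ≤ n) {a : Arrangement (Fin n) R} {r : R} {u v : Fin n}
    (hun : u.val = n - 1) (hv0 : v.val = 0) (h1 : a u = some r) (h2 : a v = none) :
    ∃ M, ordering a = M ++ [r] ∧ ordering (applyStep a (r, u, v)) = r :: M := by
  have hne : u ≠ v := fun h => by rw [h] at hun; omega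
  refine ⟨(List.range' 1 (n - 2)).filterMap (fA a), ?_, ?_⟩
  · rw [ordering_eq, range_split_wrap hn]
    simp only [List.filterMap_append]
    rw [show ([0] : List ℕ) = [v.val] by rw [hv0], show ([n-1] : List ℕ) = [u.val] by rw [hun]]
    simp only [List.filterMap_cons, List.filterMap_nil]
    rw [fA_val, fA_val, h1, h2]
    simp
  · rw [ordering_eq, range_split_wrap hn]
    simp only [List.filterMap_append]
    rw [show ([0] : List ℕ) = [v.val] by rw [hv0], show ([n-1] : List ℕ) = [u.val] by rw [hun]]
    simp only [List.filterMap_cons, List.filterMap_nil]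
    rw [fA_applyStep_src hne, fA_applyStep_tgt]
    have : (List.range' 1 (n-2)).filterMap (fA (applyStep a (r, u, v))) =
        (List.range' 1 (n-2)).filterMap (fA a) := by
      exact List.filterMap_congr fun x hx => by
        have := List.mem_range'_1.mp hx
        exact fA_applyStep_other (by omega) (by omega)
    rw [this]
    simp

end RingAux
namespace RingAux

variable {R : Type} {n : ℕ}

lemma adj_succ (hn : 3 ≤ n) {u v : Fin n} (h : v.val = u.val + 1) :
    (SimpleGraph.cycleGraph n).Adj u v := by
  rw [SimpleGraph.cycleGraph_adj']
  right
  rw [Fin.sub_def]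
  have hv := v.isLt
  have e : n - u.val + v.val = n + 1 := by omega
  simp only [e]
  rw [Nat.add_mod_left]
  exact Nat.mod_eq_of_lt (by omega)

lemma adj_pred (hn : 3 ≤ n) {u v : Fin n} (h : u.val = v.val + 1) :
    (SimpleGraph.cycleGraph n).Adj u v :=
  (adj_succ hn h).symm

lemma adj_wrap (hn : 3 ≤ n) {u v : Fin n} (h1 : u.val = 0) (h2 : v.val = n - 1) :
    (SimpleGraph.cycleGraph n).Adj u v := by
  rw [SimpleGraph.cycleGraph_adj']
  left
  rw [Fin.sub_def]
  have e : n - v.val + u.val = 1 := by omega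
  simp only [e]
  exact Nat.mod_eq_of_lt (by omega)

/-- The key dichotomy from cycle-graph adjacency. -/
lemma adj_cases (hn : 3 ≤ n) {u v : Fin n}
    (h : (SimpleGraph.cycleGraph n).Adj u v) :
    (v.val = u.val + 1) ∨ (u.val = v.val + 1) ∨
      (u.val = n - 1 ∧ v.val = 0) ∨ (u.val = 0 ∧ v.val = n - 1) := by
  rw [SimpleGraph.cycleGraph_adj'] at h
  have hu := u.isLt; have hv := v.isLt
  rcases h with h | h
  · -- (u - v).val = 1
    rw [Fin.sub_def] at h
    simp only at h
    set d := n - v.val + u.val with hd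
    rcases Nat.lt_or_ge d n with hdn | hdn
    · rw [Nat.mod_eq_of_lt hdn] at h; omega
    · rw [Nat.mod_eq_sub_mod hdn, Nat.mod_eq_of_lt (by omega)] at h; omega
  · rw [Fin.sub_def] at h
    simp only at h
    set d := n - u.val + v.val with hd
    rcases Nat.lt_or_ge d n with hdn | hdn
    · rw [Nat.mod_eq_of_lt hdn] at h; omega
    · rw [Nat.mod_eq_sub_mod hdn, Nat.mod_eq_of_lt (by omega)] at h; omega

lemma ordering_step (hn : 3 ≤ n) {a : Arrangement (Fin n) R} {s : R × Fin n × Fin n}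
    (hs : Applicable (SimpleGraph.cycleGraph n) a s) :
    ∃ m, ordering (applyStep a s) = (ordering a).rotate m := by
  obtain ⟨r, u, v⟩ := s
  obtain ⟨hadj, hu, hv⟩ := hs
  rcases adj_cases hn hadj with h | h | h | h
  · exact ⟨0, by rw [ordering_move_right h hu hv, List.rotate_zero]⟩
  · exact ⟨0, by rw [ordering_move_left h hu hv, List.rotate_zero]⟩
  · -- wrap forward : u = n-1, v = 0
    obtain ⟨M, hM1, hM2⟩ := ordering_move_wrap_fwd hn h.1 h.2 hu hv
    refine ⟨M.length, ?_⟩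
    rw [hM1, hM2, List.rotate_eq_drop_append_take (by simp)]
    simp
  · -- wrap backward : u = 0, v = n-1
    obtain ⟨M, hM1, hM2⟩ := ordering_move_wrap_bwd hn h.1 h.2 hu hv
    refine ⟨1, ?_⟩
    rw [hM1, hM2, List.rotate_eq_drop_append_take (by simp)]
    simp

lemma ordering_plan (hn : 3 ≤ n) :
    ∀ (P : List (R × Fin n × Fin n)) (a b : Arrangement (Fin n) R),
      IsPlan (SimpleGraph.cycleGraph n) P a b →
        ∃ m, ordering b = (ordering a).rotate m
  | [], a, b, hP => by cases hP; exact ⟨0, by simp⟩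
  | s :: P, a, b, hP => by
    obtain ⟨hs, hP'⟩ := hP
    obtain ⟨m1, h1⟩ := ordering_step hn hs
    obtain ⟨m2, h2⟩ := ordering_plan hn P _ b hP'
    exact ⟨m1 + m2, by rw [h2, h1, List.rotate_rotate]⟩

/- ### Measure and compaction -/

noncomputable def mu (a : Arrangement (Fin n) R) : ℕ :=
  ∑ v : Fin n, if (a v).isSome then v.val else 0

lemma sum_split (x y : Fin n) (hxy : x ≠ y) (g : Fin n → ℕ) :
    ∑ v : Fin n, g v = g x + g y + ∑ v ∈ (Finset.univ.erase x).erase y, g v := by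
  rw [← Finset.add_sum_erase _ g (Finset.mem_univ x),
    ← Finset.add_sum_erase _ g (Finset.mem_erase.mpr ⟨Ne.symm hxy, Finset.mem_univ y⟩)]
  ring

lemma mu_move_left {a : Arrangement (Fin n) R} {r : R} {u v : Fin n}
    (huv : u.val = v.val + 1) (h1 : a u = some r) (h2 : a v = none) :
    mu (applyStep a (r, u, v)) < mu a := by
  have hne : u ≠ v := fun h => by rw [h] at huv; omega
  set a' := applyStep a (r, u, v) with ha'
  have hgu : a' u = none := by simp [ha', applyStep, hne]
  have hgv : a' v = some r := by simp [ha', applyStep]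
  have hrest : ∀ w ∈ (Finset.univ.erase u).erase v, a' w = a w := by
    intro w hw
    rw [Finset.mem_erase, Finset.mem_erase] at hw
    simp [ha', applyStep, hw.1, hw.2.1]
  unfold mu
  rw [sum_split u v hne, sum_split u v hne]
  have e1 : ∑ w ∈ (Finset.univ.erase u).erase v, (if (a' w).isSome then w.val else 0) =
      ∑ w ∈ (Finset.univ.erase u).erase v, (if (a w).isSome then w.val else 0) :=
    Finset.sum_congr rfl fun w hw => by rw [hrest w hw]
  rw [e1, hgu, hgv, h1, h2]
  simp
  omega

/-- If no robot has an empty vertex directly below it, the occupied set is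
downward closed. -/
lemma down_of_no_move {a : Arrangement (Fin n) R}
    (hm : ∀ u v : Fin n, u.val = v.val + 1 → a v = none → a u = none) :
    Down a := by
  have aux : ∀ d (i j : Fin n), j.val = i.val + d → a i = none → a j = none := by
    intro d
    induction d with
    | zero => intro i j hij hi; rwa [show j = i from Fin.ext (by omega)]
    | succ d ih =>
      intro i j hij hi
      have hi1 : i.val + 1 < n := by have := j.isLt; omega
      have h' : a ⟨i.val + 1, hi1⟩ = none := hm ⟨i.val + 1, hi1⟩ i rfl hi
      exact ih ⟨i.val + 1, hi1⟩ j (by simp; omega) h'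
  intro i j hij hi
  exact aux (j.val - i.val) i j (by rw [Fin.le_def] at hij; omega) hi

lemma compact (hn : 3 ≤ n) :
    ∀ (N : ℕ) (a : Arrangement (Fin n) R), mu a ≤ N →
      ∃ c, Reach (SimpleGraph.cycleGraph n) a c ∧ Down c ∧ ordering c = ordering a := by
  intro N
  induction N with
  | zero =>
    intro a h0
    by_cases hd : Down a
    · exact ⟨a, Reach.refl a, hd, rfl⟩
    · exfalso
      have : ¬ ∀ u v : Fin n, u.val = v.val + 1 → a v = none → a u = none :=
        fun h => hd (down_of_no_move h)
      push_neg at this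
      obtain ⟨u, v, huv, hv, hu⟩ := this
      obtain ⟨r, hr⟩ := Option.ne_none_iff_exists'.mp hu
      have := mu_move_left huv hr hv
      omega
  | succ N ih =>
    intro a hN
    by_cases hd : Down a
    · exact ⟨a, Reach.refl a, hd, rfl⟩
    · have : ¬ ∀ u v : Fin n, u.val = v.val + 1 → a v = none → a u = none :=
        fun h => hd (down_of_no_move h)
      push_neg at this
      obtain ⟨u, v, huv, hv, hu⟩ := this
      obtain ⟨r, hr⟩ := Option.ne_none_iff_exists'.mp hu
      have happ : Applicable (SimpleGraph.cycleGraph n) a (r, u, v) :=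
        ⟨adj_pred hn huv, hr, hv⟩
      have hmu := mu_move_left huv hr hv
      obtain ⟨c, hrc, hdc, hoc⟩ := ih (applyStep a (r, u, v)) (by omega)
      exact ⟨c, (Reach.single happ).trans hrc, hdc,
        hoc.trans (ordering_move_left huv hr hv)⟩

/- ### Rotating the canonical arrangement -/

lemma reach_rot1 (hn : 3 ≤ n) (L : List R) (hL : L.length < n) :
    Reach (SimpleGraph.cycleGraph n) (canonA L) (canonA (L.rotate 1)) := by
  cases L with
  | nil => simp only [List.rotate_nil]; exact Reach.refl _
  | cons r M =>
    set L := r :: M with hLdef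
    have h0n : 0 < n := by omega
    have h1n : n - 1 < n := by omega
    set u : Fin n := ⟨0, h0n⟩ with hu
    set v : Fin n := ⟨n - 1, h1n⟩ with hv
    have hcu : canonA (n := n) L u = some r := by simp [canonA, hu, hLdef]
    have hcv : canonA (n := n) L v = none := by
      simp only [canonA]
      exact List.getElem?_eq_none (by simp [hLdef, hv] at hL ⊢; omega)
    have happ : Applicable (SimpleGraph.cycleGraph n) (canonA L) (r, u, v) :=
      ⟨adj_wrap hn rfl rfl, hcu, hcv⟩
    obtain ⟨M', hM1, hM2⟩ := ordering_move_wrap_bwd hn (u := u) (v := v) rfl rfl hcu hcv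
    rw [ordering_canonA (le_of_lt hL)] at hM1
    have hMM : M' = M := by injection hM1 with _ h; exact h.symm
    subst hMM
    obtain ⟨c, hrc, hdc, hoc⟩ :=
      compact hn (mu (applyStep (canonA L) (r, u, v))) (applyStep (canonA L) (r, u, v)) le_rfl
    have hrot : L.rotate 1 = M' ++ [r] := by
      rw [List.rotate_eq_drop_append_take (by simp [hLdef])]
      simp [hLdef]
    have hc : c = canonA (L.rotate 1) := by
      rw [down_eq_canon hdc, hoc, hM2, hrot]
    exact ((Reach.single happ).trans hrc).trans (hc ▸ Reach.refl c)

lemma reach_rotm (hn : 3 ≤ n) (L : List R) (hL : L.length < n) (m : ℕ) :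
    Reach (SimpleGraph.cycleGraph n) (canonA L) (canonA (L.rotate m)) := by
  induction m with
  | zero => simp only [List.rotate_zero]; exact Reach.refl _
  | succ m ih =>
    have h1 := reach_rot1 hn (L.rotate m) (by rwa [List.length_rotate])
    rw [List.rotate_rotate] at h1
    exact ih.trans h1

end RingAux
/-- In a cycle graph (ring) on `n ≥ 3` vertices occupied by `1 ≤ k < n` robots, two
arrangements of the same robot set are mutually reachable iff their cyclic
orderings of robots around the ring agree up to rotation. -/
theorem ring_reachable_iff_rotation {R : Type} {n k : ℕ} (hn : 3 ≤ n)
    (a b : Arrangement (Fin n) R) (ha : ArrInj a) (hb : ArrInj b)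
    (hrange : {r : R | ∃ v, a v = some r} = {r : R | ∃ v, b v = some r})
    (hk : (ordering a).length = k) (hk1 : 1 ≤ k) (hkn : k < n) :
    ((∃ P : List (R × Fin n × Fin n), IsPlan (SimpleGraph.cycleGraph n) P a b) ∧
     (∃ Q : List (R × Fin n × Fin n), IsPlan (SimpleGraph.cycleGraph n) Q b a)) ↔
      ∃ m : ℕ, ordering b = (ordering a).rotate m := by
  constructor
  · rintro ⟨⟨P, hP⟩, -⟩
    exact RingAux.ordering_plan hn P a b hP
  · rintro ⟨m, hm⟩
    have hlen : (ordering a).length < n := by rw [hk]; exact hkn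
    obtain ⟨ca, hra, hda, hoa⟩ := RingAux.compact hn (RingAux.mu a) a le_rfl
    obtain ⟨cb, hrb, hdb, hob⟩ := RingAux.compact hn (RingAux.mu b) b le_rfl
    have hca : ca = RingAux.canonA (ordering a) := by
      rw [RingAux.down_eq_canon hda, hoa]
    have hcb : cb = RingAux.canonA ((ordering a).rotate m) := by
      rw [RingAux.down_eq_canon hdb, hob, hm]
    have h1 : RingAux.Reach (SimpleGraph.cycleGraph n) a cb := by
      rw [hcb]
      refine hra.trans ?_
      rw [hca]
      exact RingAux.reach_rotm hn _ hlen m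
    have hab : RingAux.Reach (SimpleGraph.cycleGraph n) a b := h1.trans hrb.symm
    exact ⟨hab, hab.symm⟩
end
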